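/- arXiv:0804.1041 — 3 statements merged into one kernel-verified Lean document; each statement's English description precedes it below -/
import Mathlib

section
/- Voronoi cells under a convex distance function are star-shaped with respect to their site: if C is a compact convex set with the origin in its interior, S a finite point set, p ∈ S, and x a point with d_C(x,p) ≤ d_C(x,q) for all q ∈ S, then every point z on the line segment from x to p also satisfies d_C(z,p) ≤ d_C(z,q) for all q ∈ S. -/
open Metric Set MeasureTheory
open scoped MeasureTheory

noncomputable section

abbrev Pt := EuclideanSpace ℝ (Fin 2)

def homothet (C : Set Pt) (x : Pt) (l : ℝ) : Set Pt := (fun z => x + l • z) '' C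

def dC (C : Set Pt) (x y : Pt) : ℝ := sInf {l : ℝ | 0 ≤ l ∧ y ∈ homothet C x l}

def cross2 (u v : Pt) : ℝ := u 0 * v 1 - u 1 * v 0

def kappa (C : Set Pt) : ℝ :=
  sSup { k : ℝ | ∃ x ∈ frontier C, ∃ y ∈ frontier C, x ≠ y ∧ Collinear ℝ {x, y, (0:Pt)} ∧
      k = max (μH[1] {z ∈ frontier C | 0 ≤ cross2 x z}).toReal
              (μH[1] {z ∈ frontier C | cross2 x z ≤ 0}).toReal / dist x y }

def baseAngleSet (C : Set Pt) (x y : Pt) : Set ℝ :=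
  { θ : ℝ | ∃ a ∈ frontier C, dist a x = dist a y ∧ θ = EuclideanGeometry.angle y x a }

def alphaC (C : Set Pt) : ℝ :=
  sInf { θ : ℝ | ∃ x ∈ frontier C, ∃ y ∈ frontier C, x ≠ y ∧ θ = sSup (baseAngleSet C x y) }

def upperArcLen (D : Set Pt) (a b : Pt) : ℝ :=
  (μH[1] {z ∈ frontier D | 0 ≤ z 1 ∧ min (a 0) (b 0) ≤ z 0 ∧ z 0 ≤ max (a 0) (b 0)}).toReal

def walkLen : List Pt → ℝ
  | [] => 0
  | [_] => 0
  | a :: b :: l => dist a b + walkLen (b :: l)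

def DGadj (C : Set Pt) (S : Finset Pt) (p q : Pt) : Prop :=
  p ∈ S ∧ q ∈ S ∧ p ≠ q ∧ ∃ x : Pt, dC C x p = dC C x q ∧
    ∀ r ∈ S, r ≠ p → r ≠ q → dC C x p < dC C x r
open scoped Pointwise

def Aset (C : Set Pt) (x y : Pt) : Set ℝ := {l : ℝ | 0 ≤ l ∧ y ∈ homothet C x l}

lemma dC_eq (C : Set Pt) (x y : Pt) : dC C x y = sInf (Aset C x y) := rfl

lemma mem_homothet_iff {C : Set Pt} {x y : Pt} {l : ℝ} :
    y ∈ homothet C x l ↔ y - x ∈ l • C := by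
  constructor
  · rintro ⟨c, hc, rfl⟩
    exact ⟨c, hc, show l • c = x + l • c - x by abel⟩
  · rintro ⟨c, hc, h⟩
    have h' : l • c = y - x := h
    exact ⟨c, hc, show x + l • c = y by rw [h']; abel⟩

lemma Aset_bddBelow (C : Set Pt) (x y : Pt) : BddBelow (Aset C x y) :=
  ⟨0, fun l hl => hl.1⟩

lemma Aset_nonempty {C : Set Pt} (h0 : (0:Pt) ∈ interior C) (x y : Pt) :
    (Aset C x y).Nonempty := by
  obtain ⟨ε, hε, hball⟩ := Metric.mem_nhds_iff.mp (mem_interior_iff_mem_nhds.mp h0)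
  set v := y - x
  set l : ℝ := (‖v‖ + 1) * (2 / ε)
  have hl : 0 < l := by positivity
  refine ⟨l, le_of_lt hl, mem_homothet_iff.mpr ⟨l⁻¹ • v, ?_, ?_⟩⟩
  · apply hball
    simp only [mem_ball, dist_zero_right, norm_smul, norm_inv, Real.norm_eq_abs,
      abs_of_pos hl]
    rw [inv_mul_lt_iff₀ hl]
    calc ‖v‖ < (‖v‖ + 1) * 1 := by linarith
    _ ≤ (‖v‖ + 1) * (2/ε) * ε := by
        rw [mul_assoc]
        have : (2/ε) * ε = 2 := by field_simp
        rw [this]; nlinarith [norm_nonneg v]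
  · show l • l⁻¹ • v = y - x
    rw [smul_smul, mul_inv_cancel₀ (ne_of_gt hl), one_smul]

lemma dC_nonneg {C : Set Pt} (h0 : (0:Pt) ∈ interior C) (x y : Pt) : 0 ≤ dC C x y :=
  le_csInf (Aset_nonempty h0 x y) fun l hl => hl.1

lemma dC_le_of_mem {C : Set Pt} {x y : Pt} {l : ℝ} (hl : l ∈ Aset C x y) :
    dC C x y ≤ l := csInf_le (Aset_bddBelow C x y) hl

lemma dC_le_smul {C : Set Pt} (h0 : (0:Pt) ∈ interior C) {x y z w : Pt} {s : ℝ}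
    (hs : 0 ≤ s) (h : w - z = s • (y - x)) :
    dC C z w ≤ s * dC C x y := by
  rcases eq_or_lt_of_le hs with rfl | hs
  · rw [zero_mul]
    refine dC_le_of_mem ⟨le_refl 0, mem_homothet_iff.mpr ?_⟩
    rw [h, zero_smul]
    exact ⟨0, interior_subset h0, show (0:ℝ) • (0:Pt) = 0 from smul_zero _⟩
  · refine le_of_forall_pos_le_add fun ε hε => ?_
    obtain ⟨l, hl, hlt⟩ := Real.lt_sInf_add_pos (Aset_nonempty h0 x y) (show 0 < ε / s by positivity)
    have hmem : s * l ∈ Aset C z w := by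
      refine ⟨mul_nonneg hs.le hl.1, mem_homothet_iff.mpr ?_⟩
      obtain ⟨c, hc, hyc⟩ := mem_homothet_iff.mp hl.2
      have hyc' : l • c = y - x := hyc
      exact ⟨c, hc, show (s * l) • c = w - z by rw [h, ← hyc', smul_smul]⟩
    rw [dC_eq C z w]
    rw [← dC_eq C x y] at hlt
    calc sInf (Aset C z w) ≤ s * l := dC_le_of_mem hmem
    _ ≤ s * (dC C x y + ε / s) := by nlinarith
    _ = s * dC C x y + ε := by field_simp

lemma dC_triangle {C : Set Pt} (hconv : Convex ℝ C) (h0 : (0:Pt) ∈ interior C)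
    (x z q : Pt) : dC C x q ≤ dC C x z + dC C z q := by
  refine le_of_forall_pos_le_add fun ε hε => ?_
  obtain ⟨a, ha, halt⟩ := Real.lt_sInf_add_pos (Aset_nonempty h0 x z) (half_pos hε)
  obtain ⟨b, hb, hblt⟩ := Real.lt_sInf_add_pos (Aset_nonempty h0 z q) (half_pos hε)
  have hmem : a + b ∈ Aset C x q := by
    refine ⟨add_nonneg ha.1 hb.1, mem_homothet_iff.mpr ?_⟩
    have h1 : z - x ∈ a • C := mem_homothet_iff.mp ha.2
    have h2 : q - z ∈ b • C := mem_homothet_iff.mp hb.2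
    have : (z - x) + (q - z) ∈ a • C + b • C := Set.add_mem_add h1 h2
    rw [← hconv.add_smul ha.1 hb.1] at this
    simpa using this
  rw [← dC_eq C x z] at halt
  rw [← dC_eq C z q] at hblt
  calc dC C x q ≤ a + b := dC_le_of_mem hmem
  _ ≤ (dC C x z + ε/2) + (dC C z q + ε/2) := by linarith
  _ = dC C x z + dC C z q + ε := by ring


/-- Voronoi cells are star-shaped with respect to their site. -/
theorem voronoi_cell_starShaped
    (C : Set Pt) (hC : IsCompact C) (hconv : Convex ℝ C) (h0 : (0:Pt) ∈ interior C)
    (S : Finset Pt) (p : Pt) (hp : p ∈ S) (x : Pt)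
    (hx : ∀ q ∈ S, dC C x p ≤ dC C x q) :
    ∀ z ∈ segment ℝ x p, ∀ q ∈ S, dC C z p ≤ dC C z q := by
  rintro z ⟨a, b, ha, hb, hab, rfl⟩ q hq
  have hpz : p - (a • x + b • p) = a • (p - x) := by
    rw [show (a:ℝ) = 1 - b by linarith]; module
  have hzx : (a • x + b • p) - x = b • (p - x) := by
    rw [show (a:ℝ) = 1 - b by linarith]; module
  have h1 : dC C (a • x + b • p) p ≤ a * dC C x p := dC_le_smul h0 ha hpz
  have h2 : dC C x (a • x + b • p) ≤ b * dC C x p := dC_le_smul h0 hb hzx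
  have h3 : dC C x q ≤ dC C x (a • x + b • p) + dC C (a • x + b • p) q :=
    dC_triangle hconv h0 _ _ _
  have h4 : dC C x p ≤ dC C x q := hx q hq
  have h5 : 0 ≤ dC C x p := dC_nonneg h0 x p
  nlinarith
end
end

section
/- The Delaunay graph DG_C(S) satisfies the α_C-diamond property: for every edge (p,q) of DG_C(S), at least one of the two isosceles triangles with base pq and base angle α_C contains no point of S in its interior, where α_C = min over pairs of distinct boundary points x,y of C of max(α_{xy}, α'_{xy}), with α_{xy}, α'_{xy} the base angles of the two isosceles triangles with base xy whose apex lies on the respective boundary chain of C determined by x and y. -/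
open Metric Set MeasureTheory
open scoped MeasureTheory

noncomputable section

namespace DiamondAux

open EuclideanGeometry

lemma hom_dist (x : Pt) {lam : ℝ} (hl : 0 < lam) (a b : Pt) :
    dist (x + lam • a) (x + lam • b) = lam * dist a b := by
  simp [dist_eq_norm, add_sub_add_left_eq_sub, ← smul_sub, norm_smul, abs_of_pos hl]

lemma hom_angle (x : Pt) {lam : ℝ} (hl : 0 < lam) (a b c : Pt) :
    ∠ (x + lam • a) (x + lam • b) (x + lam • c) = ∠ a b c := by
  unfold EuclideanGeometry.angle
  rw [vsub_eq_sub, vsub_eq_sub, add_sub_add_left_eq_sub, add_sub_add_left_eq_sub,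
    ← smul_sub, ← smul_sub, InnerProductGeometry.angle_smul_smul hl.ne',
    vsub_eq_sub, vsub_eq_sub]

lemma angle_midpoint_zero {p q : Pt} (hpq : p ≠ q) :
    ∠ q p (midpoint ℝ p q) = 0 := by
  have hm : midpoint ℝ p q -ᵥ p = (2⁻¹ : ℝ) • (q -ᵥ p) := by
    rw [midpoint_vsub_left]; norm_num
  show InnerProductGeometry.angle (q -ᵥ p) (midpoint ℝ p q -ᵥ p) = 0
  rw [hm, InnerProductGeometry.angle_smul_right_of_pos _ _ (by norm_num)]
  exact InnerProductGeometry.angle_self (vsub_ne_zero.2 (Ne.symm hpq))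

lemma angle_contAt {p q B : Pt} (hpq : p ≠ q) (hB : B ≠ p) :
    ContinuousAt (fun A => ∠ q p A) B := by
  have h2 : ContinuousAt (fun y : Pt × Pt × Pt => ∠ y.1 y.2.1 y.2.2) (q, p, B) :=
    EuclideanGeometry.continuousAt_angle (Ne.symm hpq) hB
  have h1 : ContinuousAt (fun A : Pt => ((q, p, A) : Pt × Pt × Pt)) B :=
    (continuous_const.prodMk (continuous_const.prodMk continuous_id)).continuousAt
  have h3 := ContinuousAt.comp (x := B)
    (f := fun A : Pt => ((q, p, A) : Pt × Pt × Pt)) h2 h1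
  exact h3

lemma angle_contOn {p q : Pt} (hpq : p ≠ q) {E : Set Pt} (hE : ∀ A ∈ E, A ≠ p) :
    ContinuousOn (fun A => ∠ q p A) E :=
  fun A hA => (angle_contAt hpq (hE A hA)).continuousWithinAt

end DiamondAux

/-- The Delaunay graph satisfies the `α_C`-diamond property: for every edge `(p,q)`
(witnessed by an empty homothet through `p` and `q`), one of the two isosceles
triangles with base `pq` and base angle `α_C` contains no point of `S` in its
interior. -/


theorem delaunay_diamond_property
    (C : Set Pt) (hC : IsCompact C) (hconv : Convex ℝ C) (h0 : (0:Pt) ∈ interior C)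
    (S : Finset Pt) (p q : Pt) (hp : p ∈ S) (hq : q ∈ S) (hpq : p ≠ q)
    (hedge : ∃ x : Pt, ∃ lam : ℝ, 0 < lam ∧
      p ∈ frontier (homothet C x lam) ∧ q ∈ frontier (homothet C x lam) ∧
      ∀ s ∈ S, s ∉ interior (homothet C x lam)) :
    ∃ a : Pt, dist a p = dist a q ∧ EuclideanGeometry.angle q p a = alphaC C ∧
      ∀ s ∈ S, s ∉ interior (convexHull ℝ {p, q, a}) := by
  classical
  obtain ⟨x, lam, hlam, hpF, hqF, hempty⟩ := hedge
  set K := homothet C x lam with hKdef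
  let e : Pt ≃ₜ Pt := (Homeomorph.smulOfNeZero lam hlam.ne').trans (Homeomorph.addLeft x)
  have he : ∀ z, e z = x + lam • z := fun z => rfl
  have heC : e '' C = K := rfl
  have hfront : frontier K = e '' frontier C := by rw [← heC, e.image_frontier]
  have hKcpt : IsCompact K := by rw [← heC]; exact hC.image e.continuous
  have hKcl : IsClosed K := hKcpt.isClosed
  have hKconv : Convex ℝ K := by
    rw [← heC]
    rintro _ ⟨u, hu, rfl⟩ _ ⟨v, hv, rfl⟩ r₁ r₂ hr₁ hr₂ hr
    refine ⟨r₁ • u + r₂ • v, hconv hu hv hr₁ hr₂ hr, ?_⟩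
    rw [he, he, he]
    calc x + lam • (r₁ • u + r₂ • v) = (r₁ + r₂) • x + (r₁ • lam • u + r₂ • lam • v) := by
          rw [hr, one_smul, smul_add, smul_smul, smul_smul, smul_smul, smul_smul,
            mul_comm lam r₁, mul_comm lam r₂]
      _ = r₁ • (x + lam • u) + r₂ • (x + lam • v) := by
          rw [add_smul, smul_add, smul_add]; abel
  have hfK : frontier K ⊆ K := hKcl.frontier_subset
  have hpK : p ∈ K := hfK hpF
  have hqK : q ∈ K := hfK hqF
  set x' := e.symm p with hx'def
  set y' := e.symm q with hy'def
  have hex' : e x' = p := e.apply_symm_apply p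
  have hey' : e y' = q := e.apply_symm_apply q
  have hx'F : x' ∈ frontier C := by
    rw [hfront] at hpF
    obtain ⟨z, hz, hez⟩ := hpF
    rwa [hx'def, ← hez, e.symm_apply_apply]
  have hy'F : y' ∈ frontier C := by
    rw [hfront] at hqF
    obtain ⟨z, hz, hez⟩ := hqF
    rwa [hy'def, ← hez, e.symm_apply_apply]
  have hxy' : x' ≠ y' := fun h => hpq (by rw [← hex', ← hey', h])
  set m := midpoint ℝ p q with hmdef
  have hmK : m ∈ K := hKconv.segment_subset hpK hqK (midpoint_mem_segment p q)
  have hbdd : BddBelow {θ : ℝ | ∃ x_ ∈ frontier C, ∃ y_ ∈ frontier C,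
      x_ ≠ y_ ∧ θ = sSup (baseAngleSet C x_ y_)} := by
    refine ⟨0, ?_⟩
    rintro θ ⟨x1, -, y1, -, -, rfl⟩
    refine Real.sSup_nonneg ?_
    rintro θ' ⟨a, -, -, rfl⟩
    exact EuclideanGeometry.angle_nonneg _ _ _
  have halpha0 : 0 ≤ alphaC C := by
    refine Real.sInf_nonneg ?_
    rintro θ ⟨x1, -, y1, -, -, rfl⟩
    refine Real.sSup_nonneg ?_
    rintro θ' ⟨a, -, -, rfl⟩
    exact EuclideanGeometry.angle_nonneg _ _ _
  set E : Set Pt := frontier K ∩ {A | dist A p = dist A q} with hEdef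
  -- dist and angle transfer
  have hdist' : ∀ a b : Pt, dist (e a) (e b) = lam * dist a b := fun a b => by
    rw [he, he]; exact DiamondAux.hom_dist x hlam a b
  have hangle' : ∀ a b c : Pt, EuclideanGeometry.angle (e a) (e b) (e c) =
      EuclideanGeometry.angle a b c := fun a b c => by
    rw [he, he, he]; exact DiamondAux.hom_angle x hlam a b c
  have hset : baseAngleSet C x' y' = (fun A => EuclideanGeometry.angle q p A) '' E := by
    ext θ
    constructor
    · rintro ⟨a, haF, hd, rfl⟩
      refine ⟨e a, ⟨?_, ?_⟩, ?_⟩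
      · rw [hfront]; exact Set.mem_image_of_mem _ haF
      · show dist (e a) p = dist (e a) q
        rw [← hex', ← hey', hdist', hdist', hd]
      · show EuclideanGeometry.angle q p (e a) = EuclideanGeometry.angle y' x' a
        rw [← hex', ← hey']
        exact hangle' _ _ _
    · rintro ⟨A, ⟨hAF, hAd⟩, rfl⟩
      refine ⟨e.symm A, ?_, ?_, ?_⟩
      · rw [hfront] at hAF
        obtain ⟨z, hz, hez⟩ := hAF
        rwa [← hez, e.symm_apply_apply]
      · have h1 : dist (e (e.symm A)) (e x') = dist (e (e.symm A)) (e y') := by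
          rw [e.apply_symm_apply, hex', hey']; exact hAd
        rw [hdist', hdist'] at h1
        exact mul_left_cancel₀ hlam.ne' h1
      · rw [← hangle' y' x' (e.symm A), hex', hey', e.apply_symm_apply]
  by_cases hE : E.Nonempty
  · -- main case
    have hEcl : IsClosed E := by
      apply IsClosed.inter isClosed_frontier
      exact isClosed_eq (continuous_id.dist continuous_const)
        (continuous_id.dist continuous_const)
    have hEK : E ⊆ K := fun A hA => hfK hA.1
    have hEcpt : IsCompact E := hKcpt.of_isClosed_subset hEcl hEK
    have hEp : ∀ A ∈ E, A ≠ p := by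
      rintro A ⟨-, hAd⟩ rfl
      exact hpq (by simpa [eq_comm] using hAd)
    obtain ⟨A, hAE, hAmax⟩ := hEcpt.exists_isMaxOn hE (DiamondAux.angle_contOn hpq hEp)
    have hAd : dist A p = dist A q := hAE.2
    have hAK : A ∈ K := hEK hAE
    have hsup : sSup (baseAngleSet C x' y') = EuclideanGeometry.angle q p A := by
      rw [hset]
      refine le_antisymm (csSup_le (hE.image _) ?_) (le_csSup ⟨Real.pi, ?_⟩ ⟨A, hAE, rfl⟩)
      · rintro θ ⟨B, hB, rfl⟩
        exact hAmax hB
      · rintro θ ⟨B, -, rfl⟩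
        exact EuclideanGeometry.angle_le_pi _ _ _
    have halpha_le : alphaC C ≤ EuclideanGeometry.angle q p A :=
      csInf_le hbdd ⟨x', hx'F, y', hy'F, hxy', hsup.symm⟩
    -- IVT along the bisector
    set f : ℝ → Pt := fun t => (1 - t) • m + t • A with hfdef
    have hfbis : ∀ t ∈ Icc (0:ℝ) 1, dist (f t) p = dist (f t) q := by
      intro t ht
      have hm' : m ∈ (AffineSubspace.perpBisector p q : Set Pt) :=
        AffineSubspace.midpoint_mem_perpBisector p q
      have hA' : A ∈ (AffineSubspace.perpBisector p q : Set Pt) :=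
        AffineSubspace.mem_perpBisector_iff_dist_eq.2 hAd
      have hmem : (1 - t) • m + t • A ∈ (AffineSubspace.perpBisector p q : Set Pt) :=
        (AffineSubspace.perpBisector p q).convex hm' hA' (by linarith [ht.2]) ht.1 (by ring)
      exact AffineSubspace.mem_perpBisector_iff_dist_eq.1 hmem
    have hfp : ∀ t ∈ Icc (0:ℝ) 1, f t ≠ p := by
      rintro t ht hft
      refine hpq ?_
      have := hfbis t ht
      rw [hft] at this
      simpa [eq_comm] using this
    have hfK' : ∀ t ∈ Icc (0:ℝ) 1, f t ∈ K := fun t ht =>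
      hKconv hmK hAK (by linarith [ht.2]) ht.1 (by ring)
    have hfcont : Continuous f :=
      ((continuous_const.sub continuous_id).smul continuous_const).add
        (continuous_id.smul continuous_const)
    have hFcont : ContinuousOn (fun t => EuclideanGeometry.angle q p (f t)) (Icc 0 1) := by
      intro t ht
      have h3 := (DiamondAux.angle_contAt hpq (hfp t ht)).comp hfcont.continuousAt
      exact h3.continuousWithinAt
    have hf0 : f 0 = m := by simp [hfdef]
    have hf1 : f 1 = A := by simp [hfdef]
    have hF0 : EuclideanGeometry.angle q p (f 0) = 0 := by
      rw [hf0]; exact DiamondAux.angle_midpoint_zero hpq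
    have hmem : alphaC C ∈ Icc (EuclideanGeometry.angle q p (f 0))
        (EuclideanGeometry.angle q p (f 1)) := by
      rw [hF0, hf1]; exact ⟨halpha0, halpha_le⟩
    obtain ⟨t, ht, hFt⟩ := intermediate_value_Icc zero_le_one hFcont hmem
    refine ⟨f t, hfbis t ht, hFt, ?_⟩
    intro s hs hsint
    refine hempty s hs ?_
    have hsub : convexHull ℝ {p, q, f t} ⊆ K := by
      apply convexHull_min _ hKconv
      rw [Set.insert_subset_iff, Set.insert_subset_iff, Set.singleton_subset_iff]
      exact ⟨hpK, hqK, hfK' t ht⟩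
    exact interior_mono hsub hsint
  · -- degenerate case: no equidistant boundary point, alphaC C = 0
    have hbase : baseAngleSet C x' y' = ∅ := by
      rw [hset]
      rw [Set.not_nonempty_iff_eq_empty] at hE
      rw [hE, Set.image_empty]
    have hzero : alphaC C ≤ 0 := by
      refine csInf_le hbdd ⟨x', hx'F, y', hy'F, hxy', ?_⟩
      rw [hbase, Real.sSup_empty]
    have halpha : alphaC C = 0 := le_antisymm hzero halpha0
    refine ⟨m, ?_, ?_, ?_⟩
    · exact AffineSubspace.mem_perpBisector_iff_dist_eq.1
        (AffineSubspace.midpoint_mem_perpBisector p q)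
    · rw [halpha]; exact DiamondAux.angle_midpoint_zero hpq
    · intro s hs hsint
      refine hempty s hs ?_
      have hsub : convexHull ℝ {p, q, m} ⊆ K := by
        apply convexHull_min _ hKconv
        rw [Set.insert_subset_iff, Set.insert_subset_iff, Set.singleton_subset_iff]
        exact ⟨hpK, hqK, hmK⟩
      exact interior_mono hsub hsint
end
end

section
/- If a connected plane geometric graph G on a finite vertex set S satisfies the visible-pair κ'-spanner property and has the property that every direct path (walking along faces crossed by a straight segment) between two vertices p, q realizes stretch at most t₀ whenever the open segment pq avoids vertices of S, then for every pair of vertices p, q there is a path in G of Euclidean length at most max(κ', t₀)·|pq|. (Composition step used to derive the spanner bound of Theorem 1.) -/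
open Metric Set MeasureTheory
open scoped MeasureTheory

noncomputable section

theorem walkLen_append : ∀ (l1 l2 : List Pt) (s : Pt), l1.getLast? = some s →
    walkLen (l1 ++ l2) = walkLen l1 + walkLen (s :: l2)
  | [], _, _, h => by simp at h
  | [a], l2, s, h => by
    simp only [List.getLast?_singleton, Option.some.injEq] at h
    subst h
    cases l2 with
    | nil => simp [walkLen]
    | cons b t => simp [walkLen]
  | a :: b :: t, l2, s, h => by
    have ih := walkLen_append (b :: t) l2 s (by simpa using h)
    simp only [List.cons_append] at ih
    show dist a b + walkLen (b :: (t ++ l2)) =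
      (dist a b + walkLen (b :: t)) + walkLen (s :: l2)
    rw [ih]; ring

theorem mem_openSegment_sbtw {p q s : Pt} (hpq : p ≠ q) (h : s ∈ openSegment ℝ p q) :
    Sbtw ℝ p s q := by
  refine ⟨mem_segment_iff_wbtw.mp (openSegment_subset_segment _ _ _ h), ?_, ?_⟩
  · rintro rfl; exact hpq (left_mem_openSegment_iff.mp h)
  · rintro rfl; exact hpq (right_mem_openSegment_iff.mp h)

theorem sbtw_mem_openSegment {p q s : Pt} (h : Sbtw ℝ p s q) : s ∈ openSegment ℝ p q := by
  have hs : s ∈ segment ℝ p q := mem_segment_iff_wbtw.mpr h.wbtw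
  rw [← insert_endpoints_openSegment] at hs
  rcases hs with rfl | rfl | hs
  · exact absurd rfl h.ne_left
  · exact absurd rfl h.ne_right
  · exact hs

/-- Composition step: a connected plane graph with the visible-pair `κ'`-spanner
property in which direct paths along vertex-free segments have stretch at most `t₀`
is a `max(κ', t₀)`-spanner. -/
theorem visible_pair_composition
    (S : Finset Pt) (adj : Pt → Pt → Prop) (visible : Pt → Pt → Prop)
    (κ' t₀ : ℝ)
    (hadjS : ∀ p q : Pt, adj p q → p ∈ S ∧ q ∈ S)
    (hvp : ∀ p ∈ S, ∀ q ∈ S, p ≠ q → visible p q →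
      ∃ l : List Pt, l.Chain' adj ∧ l.head? = some p ∧ l.getLast? = some q ∧
        walkLen l ≤ κ' * dist p q)
    (hdirect : ∀ p ∈ S, ∀ q ∈ S, p ≠ q → (∀ s ∈ S, s ∉ openSegment ℝ p q) →
      ∃ l : List Pt, l.Chain' adj ∧ l.head? = some p ∧ l.getLast? = some q ∧
        walkLen l ≤ t₀ * dist p q) :
    ∀ p ∈ S, ∀ q ∈ S,
      ∃ l : List Pt, l.Chain' adj ∧ l.head? = some p ∧ l.getLast? = some q ∧
        walkLen l ≤ max κ' t₀ * dist p q := by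
  classical
  set M := max κ' t₀ with hM
  have key : ∀ n : ℕ, ∀ p ∈ S, ∀ q ∈ S, p ≠ q →
      (S.filter (fun s => s ∈ openSegment ℝ p q)).card = n →
      ∃ l : List Pt, l.Chain' adj ∧ l.head? = some p ∧ l.getLast? = some q ∧
        walkLen l ≤ M * dist p q := by
    intro n
    induction n using Nat.strong_induction_on with
    | _ n ih =>
      intro p hp q hq hpq hcard
      by_cases hempty : ∀ s ∈ S, s ∉ openSegment ℝ p q
      · obtain ⟨l, h1, h2, h3, h4⟩ := hdirect p hp q hq hpq hempty
        exact ⟨l, h1, h2, h3, h4.trans (mul_le_mul_of_nonneg_right (le_max_right _ _)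
          dist_nonneg)⟩
      · push_neg at hempty
        obtain ⟨s, hsS, hsseg⟩ := hempty
        have hsb : Sbtw ℝ p s q := mem_openSegment_sbtw hpq hsseg
        have hps : p ≠ s := hsb.left_ne
        have hsq : s ≠ q := hsb.ne_right
        -- cardinality bounds
        have hsubset : ∀ (a b : Pt), Sbtw ℝ a s b →
            (S.filter (fun x => x ∈ openSegment ℝ a b)).card ≥
            (S.filter (fun x => x ∈ openSegment ℝ a s)).card + 1 := by
          intro a b hsab
          have hsub : S.filter (fun x => x ∈ openSegment ℝ a s) ⊆
              (S.filter (fun x => x ∈ openSegment ℝ a b)).erase s := by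
            intro x hx
            simp only [Finset.mem_filter] at hx
            have hxab : Sbtw ℝ a x b :=
              hsab.trans_left (mem_openSegment_sbtw hsab.left_ne hx.2)
            exact Finset.mem_erase.mpr
              ⟨(mem_openSegment_sbtw hsab.left_ne hx.2).ne_right,
               Finset.mem_filter.mpr ⟨hx.1, sbtw_mem_openSegment hxab⟩⟩
          have hsmem : s ∈ S.filter (fun x => x ∈ openSegment ℝ a b) :=
            Finset.mem_filter.mpr ⟨hsS, sbtw_mem_openSegment hsab⟩
          have h1le : 1 ≤ (S.filter (fun x => x ∈ openSegment ℝ a b)).card :=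
            Finset.card_pos.mpr ⟨s, hsmem⟩
          have hle := Finset.card_le_card hsub
          rw [Finset.card_erase_of_mem hsmem] at hle
          omega
        have hc1 : (S.filter (fun x => x ∈ openSegment ℝ p s)).card < n := by
          have := hsubset p q hsb
          omega
        have hc2 : (S.filter (fun x => x ∈ openSegment ℝ q s)).card < n := by
          have := hsubset q p hsb.symm
          have hcard' : (S.filter (fun x => x ∈ openSegment ℝ q p)).card = n := by
            rw [← hcard]; congr 1; ext x; simp [openSegment_symm ℝ q p]
          omega
        have hc2' : (S.filter (fun x => x ∈ openSegment ℝ s q)).card < n := by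
          have : S.filter (fun x => x ∈ openSegment ℝ s q) =
              S.filter (fun x => x ∈ openSegment ℝ q s) := by
            ext x; simp [openSegment_symm ℝ s q]
          rw [this]; exact hc2
        obtain ⟨l1, hC1, hH1, hL1, hW1⟩ := ih _ hc1 p hp s hsS hps rfl
        obtain ⟨l2, hC2, hH2, hL2, hW2⟩ := ih _ hc2' s hsS q hq hsq rfl
        -- combine
        obtain ⟨l2', rfl⟩ : ∃ t, l2 = s :: t := by
          cases l2 with
          | nil => simp at hH2
          | cons a t => simp only [List.head?_cons, Option.some.injEq] at hH2; exact ⟨t, by rw [hH2]⟩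
        have hl2ne : l2' ≠ [] := by
          rintro rfl
          simp only [List.getLast?_singleton, Option.some.injEq] at hL2
          exact hsq hL2
        refine ⟨l1 ++ l2', ?_, ?_, ?_, ?_⟩
        · rw [show List.Chain' adj (l1 ++ l2') ↔ List.IsChain adj (l1 ++ l2') from Iff.rfl, List.isChain_append]
          refine ⟨hC1, (List.isChain_cons.mp hC2).2, ?_⟩
          intro x hx y hy
          rw [hL1] at hx
          cases hx
          exact (List.isChain_cons.mp hC2).1 y hy
        · obtain ⟨l1', rfl⟩ : ∃ t, l1 = p :: t := by
            cases l1 with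
            | nil => simp at hH1
            | cons a t => simp only [List.head?_cons, Option.some.injEq] at hH1
                          exact ⟨t, by rw [hH1]⟩
          simp
        · rw [List.getLast?_append_of_ne_nil l1 hl2ne, ← hL2]
          cases l2' with
          | nil => exact absurd rfl hl2ne
          | cons a t => simp [List.getLast?_cons_cons]
        · rw [walkLen_append l1 l2' s hL1]
          have hd : dist p s + dist s q = dist p q :=
            dist_add_dist_of_mem_segment (openSegment_subset_segment _ _ _ hsseg)
          calc walkLen l1 + walkLen (s :: l2') ≤ M * dist p s + M * dist s q :=
                add_le_add hW1 hW2
            _ = M * dist p q := by rw [← hd]; ring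
  intro p hp q hq
  by_cases hpq : p = q
  · subst hpq
    exact ⟨[p], List.isChain_singleton p, rfl, rfl, by simp [walkLen]⟩
  · exact key _ p hp q hq hpq rfl
end
end
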